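/- Let a < b be positive integers and y = (b, b, a). Then the set of nondecreasing invariant parking assortments for y is PA^{inv,↑}_3(y) = {(1,1,1), (1,1,1+a), (1,1,1+b), (1,1,1+a+b)}. -/

import Mathlib

open Classical in
/-- One car attempts to park on a one-way street with spots `1, …, m`: given the set
`occ` of occupied spots, the car with preference `p` and length `l` parks in spots
`j, j+1, …, j+l-1` for the least `j ≥ p` such that these spots all exist (are `≤ m`)
and are unoccupied; returns the new set of occupied spots, or `none` if parking fails. -/
noncomputable def parkOne (m : ℕ) (occ : Finset ℕ) (p l : ℕ) : Option (Finset ℕ) :=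
  if h : ∃ j, p ≤ j ∧ j + l ≤ m + 1 ∧ ∀ k ∈ Finset.Ico j (j + l), k ∉ occ then
    some (occ ∪ Finset.Ico (Nat.find h) (Nat.find h + l))
  else none

/-- Run the parking-assortment process for the cars `(preference, length)` in order. -/
noncomputable def parkList (m : ℕ) : List (ℕ × ℕ) → Finset ℕ → Option (Finset ℕ)
  | [], occ => some occ
  | c :: rest, occ => (parkOne m occ c.1 c.2).bind (parkList m rest)

/-- `x` is a parking assortment for the list of car lengths `y`. -/
def IsPA (y x : List ℕ) : Prop :=
  x.length = y.length ∧ (∀ a ∈ x, 1 ≤ a ∧ a ≤ y.sum) ∧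
    (parkList y.sum (x.zip y) ∅).isSome

/-- `PA y` is the set of parking assortments for `y`. -/
def PA (y : List ℕ) : Set (List ℕ) := {x | IsPA y x}

/-- `PAinv y` is the set of (permutation-)invariant parking assortments for `y`:
those preference lists all of whose rearrangements are parking assortments for `y`. -/
def PAinv (y : List ℕ) : Set (List ℕ) := {x | ∀ x', x'.Perm x → IsPA y x'}

/-- `y` is minimally invariant if the all-ones list is the only invariant
parking assortment for `y`. -/
def MinInv (y : List ℕ) : Prop := PAinv y = {List.replicate y.length 1}

private lemma parkOne_some (m : ℕ) (occ : Finset ℕ) (p l j : ℕ)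
    (h1 : p ≤ j) (h2 : j + l ≤ m + 1) (h3 : ∀ k ∈ Finset.Ico j (j + l), k ∉ occ)
    (hmin : ∀ i, i < j → ¬(p ≤ i ∧ i + l ≤ m + 1 ∧ ∀ k ∈ Finset.Ico i (i + l), k ∉ occ)) :
    parkOne m occ p l = some (occ ∪ Finset.Ico j (j + l)) := by
  have hex : ∃ j', p ≤ j' ∧ j' + l ≤ m + 1 ∧ ∀ k ∈ Finset.Ico j' (j' + l), k ∉ occ :=
    ⟨j, h1, h2, h3⟩
  have hj : Nat.find hex = j := by
    refine le_antisymm (Nat.find_le ⟨h1, h2, h3⟩) ?_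
    by_contra h
    exact hmin _ (by omega) (Nat.find_spec hex)
  unfold parkOne
  rw [dif_pos hex, hj]

private lemma parkList_cons (m : ℕ) (p l : ℕ) (rest : List (ℕ × ℕ)) (occ : Finset ℕ) :
    parkList m ((p, l) :: rest) occ = (parkOne m occ p l).bind (parkList m rest) := rfl

private lemma parkList_step {m p l : ℕ} {occ : Finset ℕ} (rest : List (ℕ × ℕ)) (j : ℕ)
    (h1 : p ≤ j) (h2 : j + l ≤ m + 1) (h3 : ∀ k ∈ Finset.Ico j (j + l), k ∉ occ)
    (hmin : ∀ i, i < j → ¬(p ≤ i ∧ i + l ≤ m + 1 ∧ ∀ k ∈ Finset.Ico i (i + l), k ∉ occ)) :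
    parkList m ((p, l) :: rest) occ = parkList m rest (occ ∪ Finset.Ico j (j + l)) := by
  rw [parkList_cons, parkOne_some m occ p l j h1 h2 h3 hmin, Option.bind_some]

private lemma parkList_fail {m p l : ℕ} {occ : Finset ℕ} (rest : List (ℕ × ℕ))
    (h : ¬ ∃ j, p ≤ j ∧ j + l ≤ m + 1 ∧ ∀ k ∈ Finset.Ico j (j + l), k ∉ occ) :
    parkList m ((p, l) :: rest) occ = none := by
  rw [parkList_cons]; unfold parkOne; rw [dif_neg h]; rfl

section scen
variable {a b : ℕ}

private lemma scenT1 (ha : 0 < a) (hab : a < b) {p2 p3 : ℕ} (h2 : 1 ≤ p2) (h2' : p2 ≤ b + 1)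
    (h3 : 1 ≤ p3) (h3' : p3 ≤ 2 * b + 1) :
    (parkList (2 * b + a) [(1, b), (p2, b), (p3, a)] ∅).isSome := by
  rw [parkList_step _ 1 le_rfl (by omega) (by simp)
      (by rintro i hi ⟨h1, -, -⟩; omega)]
  rw [parkList_step _ (b + 1) h2' (by omega)
      (by intro k hk hk'
          simp only [Finset.mem_Ico, Finset.mem_union, Finset.notMem_empty, false_or] at hk hk'
          omega)
      (by rintro i hi ⟨hp, -, hfree⟩
          exact hfree i (by simp only [Finset.mem_Ico]; omega)
            (by simp only [Finset.mem_union, Finset.mem_Ico, Finset.notMem_empty, false_or]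
                omega))]
  rw [parkList_step _ (2 * b + 1) h3' (by omega)
      (by intro k hk hk'
          simp only [Finset.mem_Ico, Finset.mem_union, Finset.notMem_empty, false_or] at hk hk'
          omega)
      (by rintro i hi ⟨hp, -, hfree⟩
          exact hfree i (by simp only [Finset.mem_Ico]; omega)
            (by simp only [Finset.mem_union, Finset.mem_Ico, Finset.notMem_empty, false_or]
                omega))]
  simp [parkList]

private lemma scen4 (ha : 0 < a) (hab : a < b) :
    (parkList (2 * b + a) [(1 + a, b), (1, b), (1, a)] ∅).isSome := by
  rw [parkList_step _ (1 + a) le_rfl (by omega) (by simp)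
      (by rintro i hi ⟨h1, -, -⟩; omega)]
  rw [parkList_step _ (a + b + 1) (by omega) (by omega)
      (by intro k hk hk'
          simp only [Finset.mem_Ico, Finset.mem_union, Finset.notMem_empty, false_or] at hk hk'
          omega)
      (by rintro i hi ⟨hp, -, hfree⟩
          exact hfree (max i (1 + a)) (by simp only [Finset.mem_Ico]; omega)
            (by simp only [Finset.mem_union, Finset.mem_Ico, Finset.notMem_empty, false_or]
                omega))]
  rw [parkList_step _ 1 le_rfl (by omega)
      (by intro k hk hk'
          simp only [Finset.mem_Ico, Finset.mem_union, Finset.notMem_empty, false_or] at hk hk'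
          omega)
      (by rintro i hi ⟨hp, -, -⟩; omega)]
  simp [parkList]

private lemma scen7 (ha : 0 < a) (hab : a < b) :
    (parkList (2 * b + a) [(1 + b, b), (1, b), (1, a)] ∅).isSome := by
  rw [parkList_step _ (1 + b) le_rfl (by omega) (by simp)
      (by rintro i hi ⟨h1, -, -⟩; omega)]
  rw [parkList_step _ 1 le_rfl (by omega)
      (by intro k hk hk'
          simp only [Finset.mem_Ico, Finset.mem_union, Finset.notMem_empty, false_or] at hk hk'
          omega)
      (by rintro i hi ⟨hp, -, -⟩; omega)]
  rw [parkList_step _ (2 * b + 1) (by omega) (by omega)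
      (by intro k hk hk'
          simp only [Finset.mem_Ico, Finset.mem_union, Finset.notMem_empty, false_or] at hk hk'
          omega)
      (by rintro i hi ⟨hp, -, hfree⟩
          exact hfree i (by simp only [Finset.mem_Ico]; omega)
            (by simp only [Finset.mem_union, Finset.mem_Ico, Finset.notMem_empty, false_or]
                omega))]
  simp [parkList]

private lemma scen9 (ha : 0 < a) (hab : a < b) :
    (parkList (2 * b + a) [(1, b), (1 + a + b, b), (1, a)] ∅).isSome := by
  rw [parkList_step _ 1 le_rfl (by omega) (by simp)
      (by rintro i hi ⟨h1, -, -⟩; omega)]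
  rw [parkList_step _ (1 + a + b) le_rfl (by omega)
      (by intro k hk hk'
          simp only [Finset.mem_Ico, Finset.mem_union, Finset.notMem_empty, false_or] at hk hk'
          omega)
      (by rintro i hi ⟨hp, -, -⟩; omega)]
  rw [parkList_step _ (1 + b) (by omega) (by omega)
      (by intro k hk hk'
          simp only [Finset.mem_Ico, Finset.mem_union, Finset.notMem_empty, false_or] at hk hk'
          omega)
      (by rintro i hi ⟨hp, -, hfree⟩
          exact hfree i (by simp only [Finset.mem_Ico]; omega)
            (by simp only [Finset.mem_union, Finset.mem_Ico, Finset.notMem_empty, false_or]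
                omega))]
  simp [parkList]

private lemma scen10 (ha : 0 < a) (hab : a < b) :
    (parkList (2 * b + a) [(1 + a + b, b), (1, b), (1, a)] ∅).isSome := by
  rw [parkList_step _ (1 + a + b) le_rfl (by omega) (by simp)
      (by rintro i hi ⟨h1, -, -⟩; omega)]
  rw [parkList_step _ 1 le_rfl (by omega)
      (by intro k hk hk'
          simp only [Finset.mem_Ico, Finset.mem_union, Finset.notMem_empty, false_or] at hk hk'
          omega)
      (by rintro i hi ⟨hp, -, -⟩; omega)]
  rw [parkList_step _ (1 + b) (by omega) (by omega)
      (by intro k hk hk'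
          simp only [Finset.mem_Ico, Finset.mem_union, Finset.notMem_empty, false_or] at hk hk'
          omega)
      (by rintro i hi ⟨hp, -, hfree⟩
          exact hfree i (by simp only [Finset.mem_Ico]; omega)
            (by simp only [Finset.mem_union, Finset.mem_Ico, Finset.notMem_empty, false_or]
                omega))]
  simp [parkList]

private lemma failA (ha : 0 < a) (hab : a < b) {x2 x3 : ℕ} (h2 : 2 ≤ x2) (h2b : x2 ≤ b)
    (h23 : x2 ≤ x3) :
    parkList (2 * b + a) [(x2, b), (1, b), (x3, a)] ∅ = none := by
  rw [parkList_step _ x2 le_rfl (by omega) (by simp)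
      (by rintro i hi ⟨h1, -, -⟩; omega)]
  rcases le_or_gt x2 (a + 1) with hc | hc
  · rw [parkList_step _ (x2 + b) (by omega) (by omega)
      (by intro k hk hk'
          simp only [Finset.mem_Ico, Finset.mem_union, Finset.notMem_empty, false_or] at hk hk'
          omega)
      (by rintro i hi ⟨hp, -, hfree⟩
          exact hfree (max i x2) (by simp only [Finset.mem_Ico]; omega)
            (by simp only [Finset.mem_union, Finset.mem_Ico, Finset.notMem_empty, false_or]
                omega))]
    refine parkList_fail _ ?_
    rintro ⟨j, hj1, hj2, hfree⟩
    exact hfree j (by simp only [Finset.mem_Ico]; omega)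
      (by simp only [Finset.mem_union, Finset.mem_Ico, Finset.notMem_empty, false_or]; omega)
  · refine parkList_fail _ ?_
    rintro ⟨j, hj1, hj2, hfree⟩
    exact hfree (max j x2) (by simp only [Finset.mem_Ico]; omega)
      (by simp only [Finset.mem_union, Finset.mem_Ico, Finset.notMem_empty, false_or]; omega)

private lemma failB (ha : 0 < a) (hab : a < b) {x2 x3 : ℕ} (h2 : b + 1 ≤ x2) (h23 : x2 ≤ x3) :
    parkList (2 * b + a) [(x2, b), (x3, b), (1, a)] ∅ = none := by
  rcases le_or_gt x2 (a + b + 1) with hc | hc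
  · rw [parkList_step _ x2 le_rfl (by omega) (by simp)
      (by rintro i hi ⟨h1, -, -⟩; omega)]
    refine parkList_fail _ ?_
    rintro ⟨j, hj1, hj2, hfree⟩
    exact hfree j (by simp only [Finset.mem_Ico]; omega)
      (by simp only [Finset.mem_union, Finset.mem_Ico, Finset.notMem_empty, false_or]; omega)
  · refine parkList_fail _ ?_
    rintro ⟨j, hj1, hj2, -⟩
    omega

private lemma failC (ha : 0 < a) (hab : a < b) {c : ℕ} (h1 : 2 ≤ c) (hne1 : c ≠ a + 1)
    (hne2 : c ≠ b + 1) (hne3 : c ≠ a + b + 1) :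
    parkList (2 * b + a) [(c, b), (1, b), (1, a)] ∅ = none := by
  rcases Nat.lt_or_ge c (a + 1) with hca | hca
  · -- 2 ≤ c ≤ a
    rw [parkList_step _ c le_rfl (by omega) (by simp)
      (by rintro i hi ⟨hh, -, -⟩; omega)]
    rw [parkList_step _ (c + b) (by omega) (by omega)
      (by intro k hk hk'
          simp only [Finset.mem_Ico, Finset.mem_union, Finset.notMem_empty, false_or] at hk hk'
          omega)
      (by rintro i hi ⟨hp, -, hfree⟩
          exact hfree (max i c) (by simp only [Finset.mem_Ico]; omega)
            (by simp only [Finset.mem_union, Finset.mem_Ico, Finset.notMem_empty, false_or]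
                omega))]
    refine parkList_fail _ ?_
    rintro ⟨j, hj1, hj2, hfree⟩
    exact hfree (max j c) (by simp only [Finset.mem_Ico]; omega)
      (by simp only [Finset.mem_union, Finset.mem_Ico, Finset.notMem_empty, false_or]; omega)
  rcases Nat.lt_or_ge c (b + 1) with hcb | hcb
  · -- a+2 ≤ c ≤ b
    rw [parkList_step _ c le_rfl (by omega) (by simp)
      (by rintro i hi ⟨hh, -, -⟩; omega)]
    refine parkList_fail _ ?_
    rintro ⟨j, hj1, hj2, hfree⟩
    exact hfree (max j c) (by simp only [Finset.mem_Ico]; omega)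
      (by simp only [Finset.mem_union, Finset.mem_Ico, Finset.notMem_empty, false_or]; omega)
  rcases Nat.lt_or_ge c (a + b + 2) with hcab | hcab
  · -- b+2 ≤ c ≤ a+b
    rw [parkList_step _ c le_rfl (by omega) (by simp)
      (by rintro i hi ⟨hh, -, -⟩; omega)]
    rw [parkList_step _ 1 le_rfl (by omega)
      (by intro k hk hk'
          simp only [Finset.mem_Ico, Finset.mem_union, Finset.notMem_empty, false_or] at hk hk'
          omega)
      (by rintro i hi ⟨hp, -, -⟩; omega)]
    refine parkList_fail _ ?_
    rintro ⟨j, hj1, hj2, hfree⟩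
    rcases le_or_gt j b with hjb | hjb
    · exact hfree j (by simp only [Finset.mem_Ico]; omega)
        (by simp only [Finset.mem_union, Finset.mem_Ico, Finset.notMem_empty, false_or]; omega)
    · exact hfree (max j c) (by simp only [Finset.mem_Ico]; omega)
        (by simp only [Finset.mem_union, Finset.mem_Ico, Finset.notMem_empty, false_or]; omega)
  · refine parkList_fail _ ?_
    rintro ⟨j, hj1, hj2, -⟩
    omega


private lemma perm2 {α : Type*} {q r v w : α} (h : [q, r].Perm [v, w]) :
    q = v ∧ r = w ∨ q = w ∧ r = v := by
  have hq : q ∈ [v, w] := h.subset List.mem_cons_self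
  simp only [List.mem_cons, List.not_mem_nil, or_false] at hq
  rcases hq with hq | hq
  · subst hq
    exact Or.inl ⟨rfl, by simpa using List.perm_singleton.mp h.cons_inv⟩
  · subst hq
    exact Or.inr ⟨rfl, by simpa using List.perm_singleton.mp ((h.trans (List.Perm.swap q v [])).cons_inv)⟩

private lemma perm3 {α : Type*} {u v w : α} {x' : List α} (h : x'.Perm [u, v, w]) :
    x' = [u, v, w] ∨ x' = [u, w, v] ∨ x' = [v, u, w] ∨ x' = [v, w, u] ∨
      x' = [w, u, v] ∨ x' = [w, v, u] := by
  have hl := h.length_eq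
  rcases x' with _ | ⟨p, x'⟩; · simp at hl
  rcases x' with _ | ⟨q, x'⟩; · simp at hl
  rcases x' with _ | ⟨r, x'⟩; · simp at hl
  rcases x' with _ | ⟨s, x'⟩; swap; · simp at hl
  have hp : p ∈ [u, v, w] := h.subset (by simp)
  simp only [List.mem_cons, List.not_mem_nil, or_false] at hp
  rcases hp with hp | hp | hp
  · subst hp
    rcases perm2 h.cons_inv with ⟨rfl, rfl⟩ | ⟨rfl, rfl⟩ <;> simp
  · subst hp
    rcases perm2 ((h.trans (List.Perm.swap p u [w])).cons_inv) with ⟨rfl, rfl⟩ | ⟨rfl, rfl⟩ <;> simp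
  · subst hp
    rcases perm2 ((h.trans (((List.Perm.swap p v []).cons u).trans (List.Perm.swap p u [v]))).cons_inv)
      with ⟨rfl, rfl⟩ | ⟨rfl, rfl⟩ <;> simp

private lemma parkOne_card {m p l q : ℕ} {occ occ' : Finset ℕ}
    (h : parkOne m occ p l = some occ') (hq : q ≤ p) (hsub : occ ⊆ Finset.Ico q (m + 1)) :
    occ'.card = occ.card + l ∧ occ' ⊆ Finset.Ico q (m + 1) := by
  unfold parkOne at h
  split at h
  case isTrue hex =>
    obtain ⟨hp, hm, hfree⟩ := Nat.find_spec hex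
    injection h with h
    subst h
    refine ⟨?_, ?_⟩
    · rw [Finset.card_union_of_disjoint (Finset.disjoint_right.mpr hfree), Nat.card_Ico]
      omega
    · refine Finset.union_subset hsub ?_
      intro k hk
      simp only [Finset.mem_Ico] at *
      omega
  case isFalse => exact absurd h (by simp)

private lemma parkList_card {m q : ℕ} : ∀ (cs : List (ℕ × ℕ)) (occ occ' : Finset ℕ),
    parkList m cs occ = some occ' → (∀ c ∈ cs, q ≤ c.1) → occ ⊆ Finset.Ico q (m + 1) →
    occ'.card = occ.card + (cs.map Prod.snd).sum ∧ occ' ⊆ Finset.Ico q (m + 1)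
  | [], occ, occ', h, _, hsub => by
    simp [parkList] at h; subst h; simpa using hsub
  | (p, l) :: rest, occ, occ', h, hpref, hsub => by
    rw [parkList_cons] at h
    cases ho : parkOne m occ p l with
    | none => rw [ho] at h; simp at h
    | some occ1 =>
      rw [ho, Option.bind_some] at h
      have h1 := parkOne_card ho (hpref (p, l) List.mem_cons_self) hsub
      have h2 := parkList_card rest occ1 occ' h (fun c hc => hpref c (by simp [hc])) h1.2
      refine ⟨?_, h2.2⟩
      rw [h2.1, h1.1]
      simp [List.sum_cons]
      omega

private lemma mkIsPA {a b p1 p2 p3 : ℕ}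
    (h1 : 1 ≤ p1) (h1' : p1 ≤ 2 * b + a) (h2 : 1 ≤ p2) (h2' : p2 ≤ 2 * b + a)
    (h3 : 1 ≤ p3) (h3' : p3 ≤ 2 * b + a)
    (hS : (parkList (2 * b + a) [(p1, b), (p2, b), (p3, a)] ∅).isSome) :
    IsPA [b, b, a] [p1, p2, p3] := by
  have hsum : [b, b, a].sum = 2 * b + a := by simp [List.sum_cons]; omega
  refine ⟨rfl, ?_, ?_⟩
  · intro v hv
    rw [hsum]
    simp only [List.mem_cons, List.not_mem_nil, or_false] at hv
    rcases hv with rfl | rfl | rfl <;> exact ⟨by omega, by omega⟩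
  · rw [hsum]
    exact hS


theorem stmt18 (a b : ℕ) (ha : 0 < a) (hab : a < b) :
    {x | x ∈ PAinv [b, b, a] ∧ x.Pairwise (· ≤ ·)} =
      ({[1, 1, 1], [1, 1, 1 + a], [1, 1, 1 + b], [1, 1, 1 + a + b]} : Set (List ℕ)) := by
  have hsum : [b, b, a].sum = 2 * b + a := by simp [List.sum_cons]; omega
  have zip3 : ∀ p q r : ℕ, [p, q, r].zip [b, b, a] = [(p, b), (q, b), (r, a)] :=
    fun _ _ _ => rfl
  ext x
  simp only [Set.mem_setOf_eq, Set.mem_insert_iff, Set.mem_singleton_iff]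
  constructor
  · rintro ⟨hx, hsort⟩
    have hself : IsPA [b, b, a] x := hx x (List.Perm.refl x)
    have hlen : x.length = 3 := by simpa using hself.1
    rcases x with _ | ⟨x1, x⟩; · simp at hlen
    rcases x with _ | ⟨x2, x⟩; · simp at hlen
    rcases x with _ | ⟨x3, x⟩; · simp at hlen
    rcases x with _ | ⟨x4, x⟩; swap; · simp at hlen
    simp only [List.pairwise_cons, List.mem_cons, List.not_mem_nil, or_false,
      List.Pairwise.nil, and_true, forall_eq_or_imp, forall_eq] at hsort
    obtain ⟨⟨h12, h13⟩, h23, -⟩ := hsort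
    have hbnd := hself.2.1
    rw [hsum] at hbnd
    have hb1 : 1 ≤ x1 ∧ x1 ≤ 2 * b + a := hbnd x1 (by simp)
    have hb3 : 1 ≤ x3 ∧ x3 ≤ 2 * b + a := hbnd x3 (by simp)
    -- Step 1 : x1 = 1
    have hx1 : x1 = 1 := by
      by_contra hx1
      have h2le : 2 ≤ x1 := by omega
      have hS := hself.2.2
      rw [hsum, zip3] at hS
      obtain ⟨occ', hocc⟩ := Option.isSome_iff_exists.mp hS
      have hcard := parkList_card (q := 2) _ _ _ hocc
        (by intro c hc
            simp only [List.mem_cons, List.not_mem_nil, or_false] at hc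
            rcases hc with rfl | rfl | rfl
            · exact h2le
            · exact (by omega : 2 ≤ x2)
            · exact (by omega : 2 ≤ x3))
        (Finset.empty_subset _)
      have hle := Finset.card_le_card hcard.2
      rw [Nat.card_Ico] at hle
      have hc1 := hcard.1
      simp only [Finset.card_empty, List.map_cons, List.map_nil, List.sum_cons,
        List.sum_nil] at hc1
      omega
    subst hx1
    -- Step 2 : x2 = 1
    have hx2 : x2 = 1 := by
      by_contra hx2'
      have h2le : 2 ≤ x2 := by omega
      rcases le_or_gt x2 b with hxb | hxb
      · have hIs := hx [x2, 1, x3] (List.Perm.swap 1 x2 [x3])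
        have hS := hIs.2.2
        rw [hsum, zip3, failA ha hab h2le hxb h23] at hS
        simp at hS
      · have hIs := hx [x2, x3, 1]
          ((List.Perm.cons x2 (List.Perm.swap 1 x3 [])).trans (List.Perm.swap 1 x2 [x3]))
        have hS := hIs.2.2
        rw [hsum, zip3, failB ha hab (by omega) h23] at hS
        simp at hS
    subst hx2
    -- Step 3 : x3 ∈ {1, 1+a, 1+b, 1+a+b}
    by_cases hc1 : x3 = 1
    · subst hc1; left; rfl
    by_cases hc2 : x3 = a + 1
    · right; left; rw [hc2, Nat.add_comm]
    by_cases hc3 : x3 = b + 1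
    · right; right; left; rw [hc3, Nat.add_comm]
    by_cases hc4 : x3 = a + b + 1
    · right; right; right
      rw [hc4, (by omega : a + b + 1 = 1 + a + b)]
    exfalso
    have h2le : 2 ≤ x3 := by omega
    have hIs := hx [x3, 1, 1]
      ((List.Perm.swap 1 x3 [1]).trans ((List.Perm.swap 1 x3 []).cons 1))
    have hS := hIs.2.2
    rw [hsum, zip3, failC ha hab h2le hc2 hc3 hc4] at hS
    simp at hS
  · intro hmem
    have hbb : (1 : ℕ) ≤ b := by omega
    rcases hmem with rfl | rfl | rfl | rfl
    · refine ⟨fun x' hp' => ?_, by simp <;> omega⟩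
      rcases perm3 hp' with rfl | rfl | rfl | rfl | rfl | rfl <;>
        exact mkIsPA (by omega) (by omega) (by omega) (by omega) (by omega) (by omega)
          (scenT1 ha hab le_rfl (by omega) le_rfl (by omega))
    · refine ⟨fun x' hp' => ?_, by simp <;> omega⟩
      rcases perm3 hp' with rfl | rfl | rfl | rfl | rfl | rfl
      · exact mkIsPA (by omega) (by omega) (by omega) (by omega) (by omega) (by omega)
          (scenT1 ha hab le_rfl (by omega) (by omega) (by omega))
      · exact mkIsPA (by omega) (by omega) (by omega) (by omega) (by omega) (by omega)
          (scenT1 ha hab (by omega) (by omega) le_rfl (by omega))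
      · exact mkIsPA (by omega) (by omega) (by omega) (by omega) (by omega) (by omega)
          (scenT1 ha hab le_rfl (by omega) (by omega) (by omega))
      · exact mkIsPA (by omega) (by omega) (by omega) (by omega) (by omega) (by omega)
          (scenT1 ha hab (by omega) (by omega) le_rfl (by omega))
      · exact mkIsPA (by omega) (by omega) (by omega) (by omega) (by omega) (by omega)
          (scen4 ha hab)
      · exact mkIsPA (by omega) (by omega) (by omega) (by omega) (by omega) (by omega)
          (scen4 ha hab)
    · refine ⟨fun x' hp' => ?_, by simp <;> omega⟩
      rcases perm3 hp' with rfl | rfl | rfl | rfl | rfl | rfl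
      · exact mkIsPA (by omega) (by omega) (by omega) (by omega) (by omega) (by omega)
          (scenT1 ha hab le_rfl (by omega) (by omega) (by omega))
      · exact mkIsPA (by omega) (by omega) (by omega) (by omega) (by omega) (by omega)
          (scenT1 ha hab (by omega) (by omega) le_rfl (by omega))
      · exact mkIsPA (by omega) (by omega) (by omega) (by omega) (by omega) (by omega)
          (scenT1 ha hab le_rfl (by omega) (by omega) (by omega))
      · exact mkIsPA (by omega) (by omega) (by omega) (by omega) (by omega) (by omega)
          (scenT1 ha hab (by omega) (by omega) le_rfl (by omega))
      · exact mkIsPA (by omega) (by omega) (by omega) (by omega) (by omega) (by omega)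
          (scen7 ha hab)
      · exact mkIsPA (by omega) (by omega) (by omega) (by omega) (by omega) (by omega)
          (scen7 ha hab)
    · refine ⟨fun x' hp' => ?_, by simp <;> omega⟩
      rcases perm3 hp' with rfl | rfl | rfl | rfl | rfl | rfl
      · exact mkIsPA (by omega) (by omega) (by omega) (by omega) (by omega) (by omega)
          (scenT1 ha hab le_rfl (by omega) (by omega) (by omega))
      · exact mkIsPA (by omega) (by omega) (by omega) (by omega) (by omega) (by omega)
          (scen9 ha hab)
      · exact mkIsPA (by omega) (by omega) (by omega) (by omega) (by omega) (by omega)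
          (scenT1 ha hab le_rfl (by omega) (by omega) (by omega))
      · exact mkIsPA (by omega) (by omega) (by omega) (by omega) (by omega) (by omega)
          (scen9 ha hab)
      · exact mkIsPA (by omega) (by omega) (by omega) (by omega) (by omega) (by omega)
          (scen10 ha hab)
      · exact mkIsPA (by omega) (by omega) (by omega) (by omega) (by omega) (by omega)
          (scen10 ha hab)
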